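/- For integers m, k, i with 0 < i < m = k−1, the rational number −(2i−2)!·(2m)!·(2m−2i−2)! / (2·(i!)²·(2i−1)!·((m−i)!)²·(2m−2i−1)!) lies in ℤ[1/2], i.e., its p-adic valuation is nonnegative for every odd prime p. -/

import Mathlib

open Nat Finset

private lemma dvd_mod_bound (q x : ℕ) (hq : 2 ≤ q) (hx : 1 ≤ x)
    (hd : q ∣ (2 * x - 1)) : q + 1 ≤ 2 * (x % q) := by
  have hq0 : 0 < q := by omega
  have hxe : q * (x / q) + x % q = x := Nat.div_add_mod x q
  rcases Nat.eq_zero_or_pos (x % q) with h0 | h1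
  · exfalso
    have hqd : q ∣ 2 * (q * (x / q)) := ⟨2 * (x / q), by ring⟩
    have hsub : q ∣ 2 * (q * (x / q)) - (2 * x - 1) := Nat.dvd_sub hqd hd
    have h1' : 2 * (q * (x / q)) - (2 * x - 1) = 1 := by omega
    rw [h1'] at hsub
    have := Nat.le_of_dvd one_pos hsub
    omega
  · have hqd : q ∣ 2 * (q * (x / q)) := ⟨2 * (x / q), by ring⟩
    have hsub : q ∣ (2 * x - 1) - 2 * (q * (x / q)) := Nat.dvd_sub hd hqd
    have heq : (2 * x - 1) - 2 * (q * (x / q)) = 2 * (x % q) - 1 := by omega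
    rw [heq] at hsub
    have := Nat.le_of_dvd (by omega) hsub
    have hlt : x % q < q := Nat.mod_lt _ hq0
    omega

private lemma key_div_ineq (q a b : ℕ) (hq : 2 ≤ q) (ha : 1 ≤ a) (hb : 1 ≤ b) :
    2 * (a / q) + (2 * a - 1) / q + 2 * (b / q) + (2 * b - 1) / q ≤
      (2 * a - 2) / q + (2 * a + 2 * b) / q + (2 * b - 2) / q := by
  have hq0 : 0 < q := by omega
  have haeq : q * (a / q) + a % q = a := Nat.div_add_mod a q
  have hbeq : q * (b / q) + b % q = b := Nat.div_add_mod b q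
  have hsa : (2 * a - 1) / q = (2 * a - 2) / q + if q ∣ (2 * a - 2 + 1) then 1 else 0 := by
    have h : 2 * a - 1 = 2 * a - 2 + 1 := by omega
    rw [h, Nat.succ_div]
  have hsb : (2 * b - 1) / q = (2 * b - 2) / q + if q ∣ (2 * b - 2 + 1) then 1 else 0 := by
    have h : 2 * b - 1 = 2 * b - 2 + 1 := by omega
    rw [h, Nat.succ_div]
  have h2ab : 2 * a + 2 * b = q * (2 * (a / q) + 2 * (b / q)) + (2 * (a % q) + 2 * (b % q)) := by
    nlinarith [haeq, hbeq]
  have hsum : (2 * a + 2 * b) / q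
      = 2 * (a / q) + 2 * (b / q) + (2 * (a % q) + 2 * (b % q)) / q := by
    rw [h2ab, Nat.mul_add_div hq0]
  have hea : 2 * a - 2 + 1 = 2 * a - 1 := by omega
  have heb : 2 * b - 2 + 1 = 2 * b - 1 := by omega
  rw [hea] at hsa
  rw [heb] at hsb
  by_cases hda : q ∣ (2 * a - 1) <;> by_cases hdb : q ∣ (2 * b - 1)
  · have h1 := dvd_mod_bound q a hq ha hda
    have h2 := dvd_mod_bound q b hq hb hdb
    have hg : 2 ≤ (2 * (a % q) + 2 * (b % q)) / q :=
      (Nat.le_div_iff_mul_le hq0).mpr (by omega)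
    rw [if_pos hda] at hsa
    rw [if_pos hdb] at hsb
    clear haeq hbeq h2ab hda hdb
    omega
  · have h1 := dvd_mod_bound q a hq ha hda
    have hg : 1 ≤ (2 * (a % q) + 2 * (b % q)) / q :=
      (Nat.le_div_iff_mul_le hq0).mpr (by omega)
    rw [if_pos hda] at hsa
    rw [if_neg hdb] at hsb
    clear haeq hbeq h2ab hda hdb
    omega
  · have h2 := dvd_mod_bound q b hq hb hdb
    have hg : 1 ≤ (2 * (a % q) + 2 * (b % q)) / q :=
      (Nat.le_div_iff_mul_le hq0).mpr (by omega)
    rw [if_neg hda] at hsa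
    rw [if_pos hdb] at hsb
    clear haeq hbeq h2ab hda hdb
    omega
  · have hg : 0 ≤ (2 * (a % q) + 2 * (b % q)) / q :=
      (Nat.le_div_iff_mul_le hq0).mpr (by omega)
    rw [if_neg hda] at hsa
    rw [if_neg hdb] at hsb
    clear haeq hbeq h2ab hda hdb
    omega

theorem frac1_in_Z_half (m k i : ℤ) (h1 : 0 < i) (h2 : i < m) (h3 : m = k - 1)
    (p : ℕ) (hp : p.Prime) (hp2 : p ≠ 2) :
    0 ≤ padicValRat p
      (-(((2 * i - 2).toNat.factorial : ℚ) * ((2 * m).toNat.factorial : ℚ) *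
          ((2 * m - 2 * i - 2).toNat.factorial : ℚ)) /
        (2 * ((i.toNat.factorial : ℚ)) ^ 2 * ((2 * i - 1).toNat.factorial : ℚ) *
          (((m - i).toNat.factorial : ℚ)) ^ 2 * ((2 * m - 2 * i - 1).toNat.factorial : ℚ))) := by
  haveI : Fact p.Prime := ⟨hp⟩
  set a := i.toNat with hadef
  set b := (m - i).toNat with hbdef
  have ha1 : 1 ≤ a := by omega
  have hb1 : 1 ≤ b := by omega
  have e1 : (2 * i - 2).toNat = 2 * a - 2 := by omega
  have e2 : (2 * m).toNat = 2 * a + 2 * b := by omega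
  have e3 : (2 * m - 2 * i - 2).toNat = 2 * b - 2 := by omega
  have e4 : (2 * i - 1).toNat = 2 * a - 1 := by omega
  have e5 : (2 * m - 2 * i - 1).toNat = 2 * b - 1 := by omega
  rw [e1, e2, e3, e4, e5]
  set N : ℕ := (2 * a - 2).factorial * (2 * a + 2 * b).factorial * (2 * b - 2).factorial
    with hN
  set D : ℕ := 2 * a.factorial ^ 2 * (2 * a - 1).factorial * b.factorial ^ 2 *
    (2 * b - 1).factorial with hD
  have hNne : N ≠ 0 := by
    simp [hN, Nat.factorial_ne_zero]
  have hDne : D ≠ 0 := by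
    simp [hD, Nat.factorial_ne_zero]
  have hexp : (-(((2 * a - 2).factorial : ℚ) * ((2 * a + 2 * b).factorial : ℚ) *
          ((2 * b - 2).factorial : ℚ)) /
        (2 * ((a.factorial : ℚ)) ^ 2 * ((2 * a - 1).factorial : ℚ) *
          ((b.factorial : ℚ)) ^ 2 * ((2 * b - 1).factorial : ℚ)))
      = -((N : ℚ) / (D : ℚ)) := by
    rw [hN, hD]
    push_cast
    ring
  rw [hexp, padicValRat.neg,
    padicValRat.div (by exact_mod_cast hNne) (by exact_mod_cast hDne),
    padicValRat.of_nat, padicValRat.of_nat]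
  have hmain : padicValNat p D ≤ padicValNat p N := by
    have hfne : ∀ n : ℕ, n.factorial ≠ 0 := fun n => Nat.factorial_ne_zero n
    have hp2' : ¬ p ∣ 2 := by
      intro hdvd
      exact hp2 ((Nat.prime_dvd_prime_iff_eq hp Nat.prime_two).mp hdvd)
    have hval2 : padicValNat p 2 = 0 := padicValNat.eq_zero_of_not_dvd hp2'
    have hDval : padicValNat p D = 2 * padicValNat p a.factorial +
        padicValNat p (2 * a - 1).factorial + 2 * padicValNat p b.factorial +
        padicValNat p (2 * b - 1).factorial := by
      rw [hD, padicValNat.mul (by positivity) (hfne _),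
        padicValNat.mul (by positivity) (by positivity),
        padicValNat.mul (by positivity) (hfne _),
        padicValNat.mul (by norm_num) (by positivity),
        padicValNat.pow _ 2, padicValNat.pow _ 2, hval2]
      ring
    have hNval : padicValNat p N = padicValNat p (2 * a - 2).factorial +
        padicValNat p (2 * a + 2 * b).factorial + padicValNat p (2 * b - 2).factorial := by
      rw [hN, padicValNat.mul (by positivity) (hfne _),
        padicValNat.mul (hfne _) (hfne _)]
    rw [hDval, hNval]
    set B0 : ℕ := 2 * a + 2 * b + 1 with hB0
    have hlog : ∀ n : ℕ, n ≤ 2 * a + 2 * b → Nat.log p n < B0 := by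
      intro n hn
      have := Nat.log_le_self p n
      omega
    rw [padicValNat_factorial (hlog a (by omega)),
      padicValNat_factorial (hlog (2 * a - 1) (by omega)),
      padicValNat_factorial (hlog b (by omega)),
      padicValNat_factorial (hlog (2 * b - 1) (by omega)),
      padicValNat_factorial (hlog (2 * a - 2) (by omega)),
      padicValNat_factorial (hlog (2 * a + 2 * b) (by omega)),
      padicValNat_factorial (hlog (2 * b - 2) (by omega))]
    rw [Finset.mul_sum, Finset.mul_sum, ← Finset.sum_add_distrib, ← Finset.sum_add_distrib,
      ← Finset.sum_add_distrib, ← Finset.sum_add_distrib, ← Finset.sum_add_distrib]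
    apply Finset.sum_le_sum
    intro j hj
    have hj1 : 1 ≤ j := (Finset.mem_Ico.mp hj).1
    have hq2 : 2 ≤ p ^ j := by
      calc 2 ≤ p := hp.two_le
      _ = p ^ 1 := (pow_one p).symm
      _ ≤ p ^ j := Nat.pow_le_pow_right hp.one_lt.le hj1
    exact key_div_ineq (p ^ j) a b hq2 ha1 hb1
  omega
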